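/- Let G be a group, N a normal subgroup of G, and H a p-Sylow subgroup of G. If g ∈ G is such that its class in G/N normalizes the p-Sylow subgroup HN/N of G/N, then there exists an element of the coset gN which normalizes H. -/

import Mathlib

open scoped Pointwise


theorem stmt_1 {G : Type*} [Group G] [Finite G] {p : ℕ} [Fact p.Prime]
    (N : Subgroup G) [N.Normal] (H : Sylow p G) (g : G)
    (hg : QuotientGroup.mk' N g ∈
      Subgroup.normalizer (((H : Subgroup G).map (QuotientGroup.mk' N) : Subgroup (G ⧸ N)) : Set (G ⧸ N))) :
    ∃ x : G, g⁻¹ * x ∈ N ∧ x ∈ Subgroup.normalizer (((H : Subgroup G) : Set G)) := by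
  set K : Subgroup G := (H : Subgroup G) ⊔ N with hK
  have hcomap : ((H : Subgroup G).map (QuotientGroup.mk' N)).comap (QuotientGroup.mk' N) = K := by
    rw [Subgroup.comap_map_eq, QuotientGroup.ker_mk']
  have hmemK : ∀ x : G, x ∈ K ↔ QuotientGroup.mk' N x ∈
      (H : Subgroup G).map (QuotientGroup.mk' N) := by
    intro x
    rw [← hcomap, Subgroup.mem_comap]
  have hgK : g ∈ Subgroup.normalizer (K : Set G) := by
    rw [Subgroup.mem_normalizer_iff]
    intro x
    rw [hmemK, hmemK (g * x * g⁻¹), map_mul, map_mul, map_inv]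
    exact Subgroup.mem_normalizer_iff.mp hg ((QuotientGroup.mk' N) x)
  have hHK : (H : Subgroup G) ≤ K := le_sup_left
  have hgHK : ((g • H : Sylow p G) : Subgroup G) ≤ K := by
    intro y hy
    obtain ⟨x, hx, rfl⟩ := hy
    exact (Subgroup.mem_normalizer_iff.mp hgK x).mp (hHK hx)
  obtain ⟨k, hk⟩ := MulAction.exists_smul_eq K ((g • H).subtype hgHK) (H.subtype hHK)
  simp_rw [Sylow.smul_subtype, Subgroup.smul_def, smul_smul] at hk
  have hnorm : (↑k * g) ∈ Subgroup.normalizer ((H : Subgroup G) : Set G) :=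
    Sylow.smul_eq_iff_mem_normalizer.mp (Sylow.subtype_injective hk)
  have hkmem : (k : G) ∈ ((H : Subgroup G) : Set G) * (N : Set G) := by
    rw [← Subgroup.mul_normal]
    exact k.2
  obtain ⟨h, hh, n, hn, hhn⟩ := hkmem
  have hhH : h ∈ (H : Subgroup G) := hh
  have hnN : n ∈ N := hn
  have hne : h⁻¹ * ↑k = n := by rw [← hhn]; group
  refine ⟨h⁻¹ * ↑k * g, ?_, ?_⟩
  · have e : g⁻¹ * (h⁻¹ * ↑k * g) = g⁻¹ * n * g := by rw [← hne]; group
    rw [e]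
    exact Subgroup.Normal.conj_mem' ‹N.Normal› n hnN g
  · have := Subgroup.mul_mem _
      ((H : Subgroup G).le_normalizer (Subgroup.inv_mem _ hhH)) hnorm
    simpa [mul_assoc] using this
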